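/- If K is a full subcryptogroup of a Hausdorff band of topological groups S such that K is discrete in the subspace topology, then K is closed in S. -/
import Mathlib


open Set TopologicalSpace

/-- The principal left ideal (with `a` adjoined) generated by `a`: `{a} ∪ {s*a : s ∈ S}`. -/
def leftIdeal {S : Type*} [Semigroup S] (a : S) : Set S :=
  insert a {x | ∃ s, x = s * a}

/-- The principal right ideal (with `a` adjoined) generated by `a`: `{a} ∪ {a*s : s ∈ S}`. -/
def rightIdeal {S : Type*} [Semigroup S] (a : S) : Set S :=
  insert a {x | ∃ s, x = a * s}

/-- Green's relation ℋ on a semigroup. -/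
def greenH {S : Type*} [Semigroup S] (a b : S) : Prop :=
  leftIdeal a = leftIdeal b ∧ rightIdeal a = rightIdeal b

/-- The ℋ-class of an element. -/
def HClass {S : Type*} [Semigroup S] (x : S) : Set S := {y | greenH y x}

/-- A semigroup is completely regular if every element is completely regular. -/
def CompletelyRegularSemigroup (S : Type*) [Semigroup S] : Prop :=
  ∀ a : S, ∃ x, a = a * x * a ∧ a * x = x * a

/-- Green's relation ℋ is a congruence. -/
def HIsCongruence (S : Type*) [Semigroup S] : Prop :=
  ∀ a b c : S, greenH a b → greenH (a * c) (b * c) ∧ greenH (c * a) (c * b)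

/-- A cryptogroup is a completely regular semigroup in which ℋ is a congruence. -/
def IsCryptogroup (S : Type*) [Semigroup S] : Prop :=
  CompletelyRegularSemigroup S ∧ HIsCongruence S

/-- In a cryptogroup every ℋ-class is a group; `idp x` (written `x⁰`) is the identity of the
ℋ-class of `x`, and `inv x` (written `x⁻¹`) is the inverse of `x` inside its ℋ-class. -/
structure CryptoOps (S : Type*) [Semigroup S] where
  idp : S → S
  inv : S → S
  idp_mem : ∀ x, greenH (idp x) x
  idp_mul : ∀ x y, greenH y x → idp x * y = y
  mul_idp : ∀ x y, greenH y x → y * idp x = y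
  inv_mem : ∀ x, greenH (inv x) x
  mul_inv : ∀ x, x * inv x = idp x
  inv_mul : ∀ x, inv x * x = idp x

/-- The set `E(S)` of idempotents of a semigroup. -/
def idemSet (S : Type*) [Semigroup S] : Set S := {e | e * e = e}

/-- `(xU)* = {y ∈ S : x⁻¹*y ∈ U and x⁰ = y⁰}`. -/
def lstar {S : Type*} [Semigroup S] (ops : CryptoOps S) (x : S) (U : Set S) : Set S :=
  {y | ops.inv x * y ∈ U ∧ ops.idp x = ops.idp y}

/-- `(Ux)* = {y ∈ S : y*x⁻¹ ∈ U and x⁰ = y⁰}`. -/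
def rstar {S : Type*} [Semigroup S] (ops : CryptoOps S) (U : Set S) (x : S) : Set S :=
  {y | y * ops.inv x ∈ U ∧ ops.idp x = ops.idp y}

/-- `(AB)* = ⋃_{a ∈ A} (aB)*`. -/
def setStar {S : Type*} [Semigroup S] (ops : CryptoOps S) (A B : Set S) : Set S :=
  ⋃ a ∈ A, lstar ops a B

/-- A full subcryptogroup: contains all idempotents, and closed under multiplication
and inversion. -/
def IsFullSubcryptogroup {S : Type*} [Semigroup S] (ops : CryptoOps S) (K : Set S) : Prop :=
  idemSet S ⊆ K ∧ (∀ x ∈ K, ∀ y ∈ K, x * y ∈ K) ∧ (∀ x ∈ K, ops.inv x ∈ K)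


lemma greenH_refl {S : Type*} [Semigroup S] (a : S) : greenH a a := ⟨rfl, rfl⟩

lemma greenH_symm {S : Type*} [Semigroup S] {a b : S} (h : greenH a b) : greenH b a :=
  ⟨h.1.symm, h.2.symm⟩

lemma greenH_trans {S : Type*} [Semigroup S] {a b c : S} (h1 : greenH a b) (h2 : greenH b c) :
    greenH a c := ⟨h1.1.trans h2.1, h1.2.trans h2.2⟩

lemma idp_eq_of_greenH {S : Type*} [Semigroup S] (ops : CryptoOps S) {x y : S}
    (h : greenH y x) : ops.idp y = ops.idp x := by
  have h1 : greenH (ops.idp y) x := greenH_trans (ops.idp_mem y) h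
  have h2 : greenH (ops.idp x) y := greenH_trans (ops.idp_mem x) (greenH_symm h)
  have e1 := ops.idp_mul x (ops.idp y) h1
  have e2 := ops.mul_idp y (ops.idp x) h2
  rw [e1] at e2
  exact e2

/-- A discrete full subcryptogroup of a Hausdorff band of topological groups is closed. -/
theorem stmt18 {S : Type*} [Semigroup S] [TopologicalSpace S] [ContinuousMul S]
    (ops : CryptoOps S) (hcrypt : IsCryptogroup S)
    (hinv : Continuous ops.inv) (hopen : ∀ x : S, IsOpen (HClass x))
    [T2Space S]
    (K : Set S) (hK : IsFullSubcryptogroup ops K) (hKdisc : DiscreteTopology K) :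
    IsClosed K := by
  obtain ⟨hE, hmul, hKinv⟩ := hK
  apply isClosed_of_closure_subset
  intro x hx
  -- the idempotent of the H-class of x lies in K
  have hidem : ops.idp x * ops.idp x = ops.idp x := ops.idp_mul x (ops.idp x) (ops.idp_mem x)
  have heK : ops.idp x ∈ K := hE hidem
  -- discreteness: an open V with V ∩ K = {idp x}
  have hsing : IsOpen ({⟨ops.idp x, heK⟩} : Set K) := isOpen_discrete _
  obtain ⟨V, hVopen, hVeq⟩ := isOpen_induced_iff.mp hsing
  have hVK : ∀ z (hz : z ∈ K), z ∈ V ↔ z = ops.idp x := by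
    intro z hz
    constructor
    · intro hzV
      have : (⟨z, hz⟩ : K) ∈ ({⟨ops.idp x, heK⟩} : Set K) := by
        rw [← hVeq]; exact hzV
      exact Subtype.ext_iff.mp this
    · intro h
      have : (⟨z, hz⟩ : K) ∈ Subtype.val ⁻¹' V := by
        rw [hVeq]; exact Subtype.ext h
      exact this
  -- continuity of (y, z) ↦ inv y * z
  have hg : Continuous (fun p : S × S => ops.inv p.1 * p.2) :=
    (hinv.comp continuous_fst).mul continuous_snd
  have hgx : (x, x) ∈ (fun p : S × S => ops.inv p.1 * p.2) ⁻¹' V := by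
    show ops.inv x * x ∈ V
    rw [ops.inv_mul x]
    exact (hVK _ heK).mpr rfl
  obtain ⟨A, B, hAopen, hBopen, hxA, hxB, hAB⟩ :=
    isOpen_prod_iff.mp (hg.isOpen_preimage V hVopen) x x hgx
  set W : Set S := A ∩ B ∩ HClass x with hWdef
  have hWopen : IsOpen W := (hAopen.inter hBopen).inter (hopen x)
  have hxW : x ∈ W := ⟨⟨hxA, hxB⟩, greenH_refl x⟩
  obtain ⟨y, hyW, hyK⟩ := mem_closure_iff.mp hx W hWopen hxW
  -- W ∩ K = {y}
  have hkey : ∀ z ∈ W, z ∈ K → z = y := by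
    intro z hzW hzK
    have hinVK : ops.inv y * z ∈ V := hAB (Set.mk_mem_prod hyW.1.1 hzW.1.2)
    have hinK : ops.inv y * z ∈ K := hmul _ (hKinv y hyK) _ hzK
    have heq : ops.inv y * z = ops.idp x := (hVK _ hinK).mp hinVK
    have hyH : greenH y x := hyW.2
    have hzH : greenH z x := hzW.2
    have hiy : ops.idp y = ops.idp x := idp_eq_of_greenH ops hyH
    have hiz : ops.idp z = ops.idp x := idp_eq_of_greenH ops hzH
    have : y * (ops.inv y * z) = y := by
      rw [heq, ← hiy, ops.mul_idp y y (greenH_refl y)]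
    calc z = ops.idp z * z := (ops.idp_mul z z (greenH_refl z)).symm
      _ = ops.idp y * z := by rw [hiz, hiy]
      _ = y * ops.inv y * z := by rw [ops.mul_inv y]
      _ = y * (ops.inv y * z) := mul_assoc _ _ _
      _ = y := this
  -- x ∈ closure {y} = {y}
  have hxy : x ∈ closure ({y} : Set S) := by
    rw [mem_closure_iff]
    intro O hOopen hxO
    obtain ⟨z, hzOW, hzK⟩ := mem_closure_iff.mp hx (O ∩ W) (hOopen.inter hWopen) ⟨hxO, hxW⟩
    exact ⟨z, hzOW.1, hkey z hzOW.2 hzK⟩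
  rw [closure_singleton] at hxy
  rw [hxy]
  exact hyK
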